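/- Let F be a field, V ∈ F^{m×n} a matrix, P : F^n → F^s an arbitrary function, and Q ∈ F^{m×s} a t-row-sparse matrix such that Q·P(x) = V·x for every x ∈ F^n. Then there exists a matrix P' ∈ F^{s×n} such that Q·P' = V; in particular, V admits an (s, t) linear data structure in which both the preprocessing map and the query map are linear. -/

import Mathlib

/-- A matrix is `t`-row-sparse if every row has at most `t` nonzero entries. -/
def RowSparse {F : Type*} [Field F] {m k : ℕ} (t : ℕ) (Q : Matrix (Fin m) (Fin k) F) : Prop :=
  ∀ i, {j | Q i j ≠ 0}.ncard ≤ t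

/-- linearization of the preprocessing function: if `V ∈ F^{m×n}`,
`P : F^n → F^s` is an arbitrary function, and `Q ∈ F^{m×s}` is `t`-row-sparse with
`Q · P(x) = V · x` for every `x`, then there is a matrix `P' ∈ F^{s×n}` with
`Q · P' = V`; in particular `V` admits an `(s,t)` linear data structure with both
the preprocessing and query maps linear. -/
theorem linearize_preprocessing {F : Type*} [Field F] {m n s t : ℕ}
    (V : Matrix (Fin m) (Fin n) F)
    (P : (Fin n → F) → (Fin s → F))
    (Q : Matrix (Fin m) (Fin s) F) (hQ : RowSparse t Q)
    (h : ∀ x : Fin n → F, Q.mulVec (P x) = V.mulVec x) :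
    ∃ P' : Matrix (Fin s) (Fin n) F, Q * P' = V := by
  refine ⟨fun j k => P (Pi.single k 1) j, ?_⟩
  ext i k
  have := congrFun (h (Pi.single k 1)) i
  simp only [Matrix.mulVec, dotProduct] at this
  change ∑ j, Q i j * P (Pi.single k 1) j = V i k
  simpa [Matrix.mul_apply, Matrix.mulVec, dotProduct, Pi.single_apply,
    mul_ite, mul_zero, mul_one] using this
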